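/- Let A and B be unital C*-algebras, G a group acting on A by *-automorphisms α, and φ a G-invariant state on A with covariant GNS representation (H_φ, π_φ, U_φ, ξ_φ). If the subspace E_φ H_φ of U_φ(G)-invariant vectors is one-dimensional, then {π_φ(A) ∪ U_φ(G)}' = ℂ·1. -/

import Mathlib

open scoped ComplexOrder

/-- Let `G` act on a unital C*-algebra `A` by *-automorphisms, let `φ` be a
`G`-invariant state with covariant GNS representation `(H, π, U, ξ)`. If the space of
`U(G)`-invariant vectors is one-dimensional (spanned by the cyclic vector `ξ`), then the
commutant of `π(A) ∪ U(G)` consists of the scalars. -/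
theorem deFinetti_stmt5
    (A : Type) [CStarAlgebra A]
    (G : Type) [Group G]
    (α : G → A ≃⋆ₐ[ℂ] A) (hα : ∀ g h a, α (g * h) a = α g (α h a))
    (H : Type) [NormedAddCommGroup H] [InnerProductSpace ℂ H] [CompleteSpace H]
    (π : A →⋆ₐ[ℂ] (H →L[ℂ] H)) (ξ : H) (hξ : ‖ξ‖ = 1)
    (φ : A → ℂ) (hφ : ∀ a, φ a = (inner ℂ ξ (π a ξ) : ℂ))
    (hφinv : ∀ g a, φ (α g a) = φ a)
    (hcyc : Dense {x : H | ∃ a, π a ξ = x})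
    (U : G → (H →L[ℂ] H))
    (hUmul : ∀ g h, U (g * h) = U g * U h)
    (hUunitary : ∀ g, U g ∈ unitary (H →L[ℂ] H))
    (hUξ : ∀ g, U g ξ = ξ)
    (hcov : ∀ g a, U g * π a = π (α g a) * U g)
    (hdim : ∀ x : H, (∀ g, U g x = x) → ∃ c : ℂ, x = c • ξ) :
    ∀ T : H →L[ℂ] H, (∀ a, T * π a = π a * T) → (∀ g, T * U g = U g * T) →
      ∃ c : ℂ, T = c • (1 : H →L[ℂ] H) := by
  intro T hTπ hTU
  have hTξ : ∀ g, U g (T ξ) = T ξ := by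
    intro g
    have := congrArg (fun S : H →L[ℂ] H => S ξ) (hTU g)
    simp only [ContinuousLinearMap.mul_apply] at this
    rw [← this, hUξ]
  obtain ⟨c, hc⟩ := hdim (T ξ) hTξ
  refine ⟨c, ?_⟩
  ext x
  have heq : Set.EqOn (fun y => T y) (fun y => (c • (1 : H →L[ℂ] H)) y)
      {x : H | ∃ a, π a ξ = x} := by
    rintro y ⟨a, rfl⟩
    have := congrArg (fun S : H →L[ℂ] H => S ξ) (hTπ a)
    simp only [ContinuousLinearMap.mul_apply] at this
    simp only [this, hc, map_smul, ContinuousLinearMap.smul_apply,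
      ContinuousLinearMap.one_apply]
  exact congrFun (Continuous.ext_on hcyc T.continuous
    ((c • (1 : H →L[ℂ] H)).continuous) heq) x
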